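/- In ℝ², let Ω = {(x, y) : |x| ≤ π/2, |y| ≤ 1/2} and define the probability measure μ(A) = |A ∩ Ω|/|Ω| for measurable A ⊆ ℝ². Then μ is log-concave, |B₂²| = |Ω| = π, μ(t·B₂²) ≤ μ(t·Ω) for all t > 0, and yet B₂² is not contained in Ω. -/

import Mathlib

open MeasureTheory Filter Set Pointwise Real

open scoped ENNReal NNReal


lemma bm1_compact {K L : Set ℝ} (hK : IsCompact K) (hKne : K.Nonempty)
    (hL : IsCompact L) (hLne : L.Nonempty) :
    volume K + volume L ≤ volume (K + L) := by
  set k := sSup K with hk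
  set l := sInf L with hl
  have hkK : k ∈ K := hK.sSup_mem hKne
  have hlL : l ∈ L := hL.sInf_mem hLne
  have h1 : (fun x => x + l) '' K ⊆ K + L := fun x ⟨a, ha, hax⟩ => ⟨a, ha, l, hlL, hax⟩
  have h2 : (fun x => k + x) '' L ⊆ K + L := fun x ⟨b, hb, hbx⟩ => ⟨k, hkK, b, hb, hbx⟩
  have hmeas : MeasurableSet ((fun x => k + x) '' L) :=
    (hL.image (continuous_add_left k)).measurableSet
  have hinter : (fun x => x + l) '' K ∩ (fun x => k + x) '' L ⊆ {k + l} := by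
    rintro x ⟨⟨a, ha, rfl⟩, ⟨b, hb, hx⟩⟩
    have h1 : a ≤ k := le_csSup hK.bddAbove ha
    have h2 : l ≤ b := csInf_le hL.bddBelow hb
    have : a + l = k + b := hx.symm
    simp only [mem_singleton_iff]
    linarith [this]
  have hvol1 : volume ((fun x => x + l) '' K) = volume K := by
    have : (fun x => x + l) '' K = (fun x => x + -l) ⁻¹' K := by
      ext x; constructor
      · rintro ⟨a, ha, rfl⟩; simpa using ha
      · intro hx; exact ⟨x + -l, hx, by ring⟩
    rw [this, measure_preimage_add_right]
  have hvol2 : volume ((fun x => k + x) '' L) = volume L := by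
    have : (fun x => k + x) '' L = (fun x => -k + x) ⁻¹' L := by
      ext x; constructor
      · rintro ⟨a, ha, rfl⟩; simpa using ha
      · intro hx; exact ⟨-k + x, hx, by ring⟩
    rw [this, measure_preimage_add]
  calc volume K + volume L
      = volume ((fun x => x + l) '' K) + volume ((fun x => k + x) '' L) := by rw [hvol1, hvol2]
    _ = volume ((fun x => x + l) '' K ∪ (fun x => k + x) '' L)
        + volume ((fun x => x + l) '' K ∩ (fun x => k + x) '' L) :=
        (measure_union_add_inter _ hmeas).symm
    _ ≤ volume (K + L) + 0 :=
        add_le_add (measure_mono (union_subset h1 h2))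
          (le_trans (measure_mono hinter) (le_of_eq (measure_singleton _)))
    _ = volume (K + L) := by simp

-- ENNReal weighted AM-GM
lemma ennreal_amgm {lam : ℝ} (h0 : 0 < lam) (h1 : lam < 1) (a b : ℝ≥0∞) :
    a ^ lam * b ^ (1 - lam) ≤ ENNReal.ofReal lam * a + ENNReal.ofReal (1 - lam) * b := by
  have hl0 : (0:ℝ) ≤ lam := h0.le
  have hl1 : (0:ℝ) ≤ 1 - lam := by linarith
  rcases eq_or_ne a ⊤ with rfl | ha
  · rcases eq_or_ne b 0 with rfl | hb
    · rw [ENNReal.zero_rpow_of_pos (by linarith : (0:ℝ) < 1 - lam)]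
      simp
    · have : (⊤ : ℝ≥0∞) ^ lam = ⊤ := ENNReal.top_rpow_of_pos h0
      rw [this]
      have hb' : b ^ (1 - lam) ≠ 0 := by
        simp [ENNReal.rpow_eq_zero_iff, hb]
        intro h; linarith
      rw [ENNReal.top_mul hb']
      have : ENNReal.ofReal lam * ⊤ = ⊤ :=
        ENNReal.mul_top (by simp [ENNReal.ofReal_eq_zero]; linarith)
      simp [this]
  rcases eq_or_ne b ⊤ with rfl | hb
  · have : (⊤ : ℝ≥0∞) ^ (1 - lam) = ⊤ := ENNReal.top_rpow_of_pos (by linarith)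
    rw [this]
    rcases eq_or_ne a 0 with rfl | ha0
    · rw [ENNReal.zero_rpow_of_pos h0]; simp
    · have ha' : a ^ lam ≠ 0 := by
        simp [ENNReal.rpow_eq_zero_iff, ha0]
        intro h; linarith
      rw [ENNReal.mul_top ha']
      have : ENNReal.ofReal (1 - lam) * ⊤ = ⊤ :=
        ENNReal.mul_top (by simp [ENNReal.ofReal_eq_zero]; linarith)
      simp [this]
  -- both finite
  lift a to ℝ≥0 using ha
  lift b to ℝ≥0 using hb
  have key := NNReal.geom_mean_le_arith_mean2_weighted lam.toNNReal (1 - lam).toNNReal a b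
    (by rw [← Real.toNNReal_add hl0 hl1]; norm_num)
  rw [Real.coe_toNNReal _ hl0, Real.coe_toNNReal _ hl1] at key
  calc (a:ℝ≥0∞) ^ lam * (b:ℝ≥0∞) ^ (1 - lam)
      = ((a ^ lam * b ^ (1 - lam) : ℝ≥0) : ℝ≥0∞) := by
        rw [ENNReal.coe_mul, ← ENNReal.coe_rpow_of_nonneg _ hl0,
          ← ENNReal.coe_rpow_of_nonneg _ hl1]
    _ ≤ ((lam.toNNReal * a + (1-lam).toNNReal * b : ℝ≥0) : ℝ≥0∞) := ENNReal.coe_le_coe.mpr key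
    _ = ENNReal.ofReal lam * a + ENNReal.ofReal (1 - lam) * b := by
        rw [ENNReal.coe_add, ENNReal.coe_mul, ENNReal.coe_mul]
        rfl

-- 1D BM for measurable sets
lemma bm1_meas {S T : Set ℝ} (hS : MeasurableSet S) (hSne : S.Nonempty)
    (hT : MeasurableSet T) (hTne : T.Nonempty)
    (hSf : volume S ≠ ⊤) (hTf : volume T ≠ ⊤) :
    volume S + volume T ≤ volume (S + T) := by
  rcases eq_or_ne (volume (S + T)) ⊤ with htop | htop
  · simp [htop]
  refine ENNReal.le_of_forall_pos_le_add fun ε hε _ => ?_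
  have hε2 : ((ε:ℝ≥0∞)/2) ≠ 0 := by
    simp [ENNReal.div_eq_zero_iff]
    exact_mod_cast hε.ne'
  obtain ⟨K, hKS, hKc, hKv⟩ := hS.exists_isCompact_lt_add hSf hε2
  obtain ⟨L, hLT, hLc, hLv⟩ := hT.exists_isCompact_lt_add hTf hε2
  -- K, L may be empty; enlarge by a point of S, T
  obtain ⟨s, hs⟩ := hSne
  obtain ⟨t, ht⟩ := hTne
  set K' := K ∪ {s}
  set L' := L ∪ {t}
  have hK'c : IsCompact K' := hKc.union isCompact_singleton
  have hL'c : IsCompact L' := hLc.union isCompact_singleton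
  have hK'S : K' ⊆ S := union_subset hKS (by simpa using hs)
  have hL'T : L' ⊆ T := union_subset hLT (by simpa using ht)
  have key := bm1_compact hK'c ⟨s, by simp [K']⟩ hL'c ⟨t, by simp [L']⟩
  have h1 : volume S < volume K' + ε/2 :=
    lt_of_lt_of_le hKv (by exact add_le_add_left (measure_mono subset_union_left) _)
  have h2 : volume T < volume L' + ε/2 :=
    lt_of_lt_of_le hLv (by exact add_le_add_left (measure_mono subset_union_left) _)
  calc volume S + volume T ≤ (volume K' + ε/2) + (volume L' + ε/2) :=
        add_le_add h1.le h2.le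
    _ = (volume K' + volume L') + (ε/2 + ε/2) := by ring
    _ ≤ volume (K' + L') + ε := by
        rw [ENNReal.add_halves]
        exact add_le_add_left key _
    _ ≤ volume (S + T) + ε :=
        add_le_add_left (measure_mono (add_subset_add hK'S hL'T)) _

-- scaled, measurable version combining everything (1D)
lemma bm1_smul {S T : Set ℝ} (hS : MeasurableSet S) (hSne : S.Nonempty)
    (hT : MeasurableSet T) (hTne : T.Nonempty)
    (hSf : volume S ≠ ⊤) (hTf : volume T ≠ ⊤)
    {lam : ℝ} (h0 : 0 < lam) (h1 : lam < 1) :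
    ENNReal.ofReal lam * volume S + ENNReal.ofReal (1 - lam) * volume T
      ≤ volume (lam • S + (1 - lam) • T) := by
  have hvS : volume (lam • S) = ENNReal.ofReal lam * volume S := by
    rw [Measure.addHaar_smul]
    congr 1
    rw [Module.finrank_self, pow_one, abs_of_pos h0]
  have hvT : volume ((1-lam) • T) = ENNReal.ofReal (1-lam) * volume T := by
    rw [Measure.addHaar_smul]
    congr 1
    rw [Module.finrank_self, pow_one, abs_of_pos (by linarith)]
  have hmS : MeasurableSet (lam • S) := hS.const_smul₀ lam
  have hmT : MeasurableSet ((1-lam) • T) := hT.const_smul₀ (1-lam)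
  have := bm1_meas hmS (hSne.smul_set) hmT (hTne.smul_set)
    (by rw [hvS]; exact ENNReal.mul_ne_top ENNReal.ofReal_ne_top hSf)
    (by rw [hvT]; exact ENNReal.mul_ne_top ENNReal.ofReal_ne_top hTf)
  rw [hvS, hvT] at this
  exact this

lemma pl1 {lam : ℝ} (h0 : 0 < lam) (h1 : lam < 1) (f g h : ℝ → ℝ≥0∞)
    (hf : Measurable f) (hg : Measurable g) (hh : Measurable h)
    (hfi : ∫⁻ x, f x ≠ ⊤) (hgi : ∫⁻ x, g x ≠ ⊤)
    (hfs : (⨆ x, f x) ≠ ⊤) (hgs : (⨆ x, g x) ≠ ⊤)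
    (hle : ∀ a b : ℝ, f a ^ lam * g b ^ (1 - lam) ≤ h (lam * a + (1 - lam) * b)) :
    (∫⁻ x, f x) ^ lam * (∫⁻ x, g x) ^ (1 - lam) ≤ ∫⁻ x, h x := by
  have h1' : (0:ℝ) < 1 - lam := by linarith
  set Mf := ⨆ x, f x with hMf
  set Mg := ⨆ x, g x with hMg
  rcases eq_or_ne Mf 0 with hMf0 | hMf0
  · have : ∀ x, f x = 0 := fun x => le_antisymm (hMf0 ▸ le_iSup f x) zero_le
    have : (∫⁻ x, f x) = 0 := by simp [this]
    rw [this, ENNReal.zero_rpow_of_pos h0, zero_mul]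
    exact zero_le
  rcases eq_or_ne Mg 0 with hMg0 | hMg0
  · have : ∀ x, g x = 0 := fun x => le_antisymm (hMg0 ▸ le_iSup g x) zero_le
    have : (∫⁻ x, g x) = 0 := by simp [this]
    rw [this, ENNReal.zero_rpow_of_pos h1', mul_zero]
    exact zero_le
  set c := Mf ^ lam * Mg ^ (1 - lam) with hc
  have hc0 : c ≠ 0 := by
    apply mul_ne_zero
    · exact (ENNReal.rpow_pos (pos_iff_ne_zero.mpr hMf0) hfs).ne'
    · exact (ENNReal.rpow_pos (pos_iff_ne_zero.mpr hMg0) hgs).ne'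
  have hcT : c ≠ ⊤ := ENNReal.mul_ne_top
    (ENNReal.rpow_ne_top_of_nonneg h0.le hfs) (ENNReal.rpow_ne_top_of_nonneg h1'.le hgs)
  -- normalized functions
  set f' := fun x => f x / Mf with hf'
  set g' := fun x => g x / Mg with hg'
  set h'' := fun x => min (h x / c) 1 with hh''
  have hf'le : ∀ x, f' x ≤ 1 := fun x =>
    ENNReal.div_le_of_le_mul (by rw [one_mul]; exact le_iSup f x)
  have hg'le : ∀ x, g' x ≤ 1 := fun x =>
    ENNReal.div_le_of_le_mul (by rw [one_mul]; exact le_iSup g x)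
  have hf'T : ∀ x, f' x ≠ ⊤ := fun x => ne_top_of_le_ne_top ENNReal.one_ne_top (hf'le x)
  have hg'T : ∀ x, g' x ≠ ⊤ := fun x => ne_top_of_le_ne_top ENNReal.one_ne_top (hg'le x)
  have hh''le : ∀ x, h'' x ≤ 1 := fun x => min_le_right _ _
  have hh''T : ∀ x, h'' x ≠ ⊤ := fun x => ne_top_of_le_ne_top ENNReal.one_ne_top (hh''le x)
  set F := fun x => (f' x).toReal with hF
  set G := fun x => (g' x).toReal with hG
  set H := fun x => (h'' x).toReal with hH
  have hFof : ∀ x, ENNReal.ofReal (F x) = f' x := fun x => ENNReal.ofReal_toReal (hf'T x)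
  have hGof : ∀ x, ENNReal.ofReal (G x) = g' x := fun x => ENNReal.ofReal_toReal (hg'T x)
  have hHof : ∀ x, ENNReal.ofReal (H x) = h'' x := fun x => ENNReal.ofReal_toReal (hh''T x)
  have hFle1 : ∀ x, F x ≤ 1 := fun x => by
    rw [hF]; exact ENNReal.toReal_le_of_le_ofReal one_pos.le (by simpa using hf'le x)
  have hGle1 : ∀ x, G x ≤ 1 := fun x => by
    rw [hG]; exact ENNReal.toReal_le_of_le_ofReal one_pos.le (by simpa using hg'le x)
  have hf'm : Measurable f' := hf.div_const Mf
  have hg'm : Measurable g' := hg.div_const Mg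
  have hh''m : Measurable h'' := (hh.div_const c).min measurable_const
  have hFm : Measurable F := hf'm.ennreal_toReal
  have hGm : Measurable G := hg'm.ennreal_toReal
  have hHm : Measurable H := hh''m.ennreal_toReal
  -- integrals of normalized functions
  have hIf' : (∫⁻ x, f' x) = (∫⁻ x, f x) * Mf⁻¹ := by
    simp only [hf', div_eq_mul_inv]
    exact lintegral_mul_const' _ _ (ENNReal.inv_ne_top.mpr hMf0)
  have hIg' : (∫⁻ x, g' x) = (∫⁻ x, g x) * Mg⁻¹ := by
    simp only [hg', div_eq_mul_inv]
    exact lintegral_mul_const' _ _ (ENNReal.inv_ne_top.mpr hMg0)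
  have hIf : (∫⁻ x, f x) = Mf * (∫⁻ x, f' x) := by
    rw [hIf', ← mul_assoc, mul_comm Mf, mul_assoc, ENNReal.mul_inv_cancel hMf0 hfs, mul_one]
  have hIg : (∫⁻ x, g x) = Mg * (∫⁻ x, g' x) := by
    rw [hIg', ← mul_assoc, mul_comm Mg, mul_assoc, ENNReal.mul_inv_cancel hMg0 hgs, mul_one]
  have hIf'fin : (∫⁻ x, f' x) ≠ ⊤ := by
    rw [hIf']; exact ENNReal.mul_ne_top hfi (ENNReal.inv_ne_top.mpr hMf0)
  have hIg'fin : (∫⁻ x, g' x) ≠ ⊤ := by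
    rw [hIg']; exact ENNReal.mul_ne_top hgi (ENNReal.inv_ne_top.mpr hMg0)
  -- layer cake
  have LCf : (∫⁻ x, f' x) = ∫⁻ t in Ioi (0:ℝ), volume {a | t ≤ F a} := by
    rw [← lintegral_eq_lintegral_meas_le volume
      (Filter.Eventually.of_forall fun x => ENNReal.toReal_nonneg) hFm.aemeasurable]
    exact lintegral_congr fun x => (hFof x).symm
  have LCg : (∫⁻ x, g' x) = ∫⁻ t in Ioi (0:ℝ), volume {a | t ≤ G a} := by
    rw [← lintegral_eq_lintegral_meas_le volume
      (Filter.Eventually.of_forall fun x => ENNReal.toReal_nonneg) hGm.aemeasurable]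
    exact lintegral_congr fun x => (hGof x).symm
  have LCh : (∫⁻ x, h'' x) = ∫⁻ t in Ioi (0:ℝ), volume {a | t ≤ H a} := by
    rw [← lintegral_eq_lintegral_meas_le volume
      (Filter.Eventually.of_forall fun x => ENNReal.toReal_nonneg) hHm.aemeasurable]
    exact lintegral_congr fun x => (hHof x).symm
  -- restrict f, g layer cakes to Ioo 0 1
  have restr : ∀ (F₀ : ℝ → ℝ), (∀ x, F₀ x ≤ 1) →
      ∫⁻ t in Ioi (0:ℝ), volume {a | t ≤ F₀ a} = ∫⁻ t in Ioo (0:ℝ) 1, volume {a | t ≤ F₀ a} := by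
    intro F₀ hb
    have hsplit : Ioo (0:ℝ) 1 ∪ Ici (1:ℝ) = Ioi 0 := Ioo_union_Ici_eq_Ioi one_pos
    have hdisj : Disjoint (Ioo (0:ℝ) 1) (Ici 1) :=
      disjoint_left.mpr fun x hx hx' => absurd hx' (not_le.mpr hx.2)
    rw [← hsplit, lintegral_union measurableSet_Ici hdisj]
    have heq : ∫⁻ t in Ici (1:ℝ), volume {a | t ≤ F₀ a} = ∫⁻ t in Ioi (1:ℝ), volume {a | t ≤ F₀ a} :=
      setLIntegral_congr (Ioi_ae_eq_Ici (μ := volume) (a := (1:ℝ))).symm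
    rw [heq]
    have hmeas : Measurable fun t : ℝ => volume {a | t ≤ F₀ a} :=
      Antitone.measurable fun t t' htt' =>
        measure_mono fun a (ha : t' ≤ F₀ a) => le_trans htt' ha
    have hz : ∫⁻ t in Ioi (1:ℝ), volume {a | t ≤ F₀ a} = 0 := by
      rw [setLIntegral_eq_zero_iff measurableSet_Ioi hmeas]
      refine Filter.Eventually.of_forall fun t ht => ?_
      have hemp : {a | t ≤ F₀ a} = ∅ := by
        ext a; simp only [mem_setOf_eq, mem_empty_iff_false, iff_false, not_le]
        exact lt_of_le_of_lt (hb a) ht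
      simp [hemp]
    rw [hz, add_zero]
  -- the key pointwise estimate on level sets
  have key : ∀ t ∈ Ioo (0:ℝ) 1,
      ENNReal.ofReal lam * volume {a | t ≤ F a} + ENNReal.ofReal (1 - lam) * volume {a | t ≤ G a}
        ≤ volume {x | t ≤ H x} := by
    intro t ht
    obtain ⟨ht0, ht1⟩ := ht
    set S := {a | t ≤ F a} with hS
    set T := {a | t ≤ G a} with hT
    have hSm : MeasurableSet S := hFm measurableSet_Ici
    have hTm : MeasurableSet T := hGm measurableSet_Ici
    have hsupf' : (⨆ x, f' x) = 1 := by
      simp only [hf', div_eq_mul_inv]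
      rw [← ENNReal.iSup_mul, ← hMf, ENNReal.mul_inv_cancel hMf0 hfs]
    have hsupg' : (⨆ x, g' x) = 1 := by
      simp only [hg', div_eq_mul_inv]
      rw [← ENNReal.iSup_mul, ← hMg, ENNReal.mul_inv_cancel hMg0 hgs]
    have hSne : S.Nonempty := by
      have : ENNReal.ofReal t < ⨆ x, f' x := by
        rw [hsupf']; exact ENNReal.ofReal_lt_one.mpr ht1
      obtain ⟨a, ha⟩ := lt_iSup_iff.mp this
      exact ⟨a, by
        have := ENNReal.toReal_mono (hf'T a) ha.le
        rwa [ENNReal.toReal_ofReal ht0.le] at this⟩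
    have hTne : T.Nonempty := by
      have : ENNReal.ofReal t < ⨆ x, g' x := by
        rw [hsupg']; exact ENNReal.ofReal_lt_one.mpr ht1
      obtain ⟨a, ha⟩ := lt_iSup_iff.mp this
      exact ⟨a, by
        have := ENNReal.toReal_mono (hg'T a) ha.le
        rwa [ENNReal.toReal_ofReal ht0.le] at this⟩
    have hoft0 : ENNReal.ofReal t ≠ 0 := by simp [ht0]
    have hSsub : S ⊆ {a | ENNReal.ofReal t ≤ f' a} := fun a ha => by
      show ENNReal.ofReal t ≤ f' a
      rw [← hFof a]; exact ENNReal.ofReal_le_ofReal ha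
    have hTsub : T ⊆ {a | ENNReal.ofReal t ≤ g' a} := fun a ha => by
      show ENNReal.ofReal t ≤ g' a
      rw [← hGof a]; exact ENNReal.ofReal_le_ofReal ha
    have hSf : volume S ≠ ⊤ := by
      refine ne_top_of_le_ne_top ?_ (measure_mono hSsub)
      refine ne_top_of_le_ne_top ?_ (meas_ge_le_lintegral_div hf'm.aemeasurable hoft0 ENNReal.ofReal_ne_top)
      exact (ENNReal.div_lt_top hIf'fin hoft0).ne
    have hTf : volume T ≠ ⊤ := by
      refine ne_top_of_le_ne_top ?_ (measure_mono hTsub)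
      refine ne_top_of_le_ne_top ?_ (meas_ge_le_lintegral_div hg'm.aemeasurable hoft0 ENNReal.ofReal_ne_top)
      exact (ENNReal.div_lt_top hIg'fin hoft0).ne
    refine le_trans (bm1_smul hSm hSne hTm hTne hSf hTf h0 h1) (measure_mono ?_)
    -- lam • S + (1-lam) • T ⊆ {x | t ≤ H x}
    rintro x ⟨u, ⟨a, ha, rfl⟩, v, ⟨b, hb, rfl⟩, rfl⟩
    have hfa : ENNReal.ofReal t * Mf ≤ f a := by
      have h1 : ENNReal.ofReal t ≤ f' a := hSsub ha
      rw [hf'] at h1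
      exact (ENNReal.le_div_iff_mul_le (Or.inl hMf0) (Or.inl hfs)).mp h1
    have hgb : ENNReal.ofReal t * Mg ≤ g b := by
      have h1 : ENNReal.ofReal t ≤ g' b := hTsub hb
      rw [hg'] at h1
      exact (ENNReal.le_div_iff_mul_le (Or.inl hMg0) (Or.inl hgs)).mp h1
    have hcomb : ENNReal.ofReal t * c ≤ h (lam * a + (1 - lam) * b) := by
      refine le_trans ?_ (hle a b)
      calc ENNReal.ofReal t * c
          = (ENNReal.ofReal t * Mf) ^ lam * (ENNReal.ofReal t * Mg) ^ (1 - lam) := by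
            rw [ENNReal.mul_rpow_of_ne_top ENNReal.ofReal_ne_top hfs,
              ENNReal.mul_rpow_of_ne_top ENNReal.ofReal_ne_top hgs,
              hc]
            have : ENNReal.ofReal t ^ lam * ENNReal.ofReal t ^ (1 - lam) = ENNReal.ofReal t := by
              rw [← ENNReal.rpow_add _ _ hoft0 ENNReal.ofReal_ne_top]
              norm_num
            calc ENNReal.ofReal t * (Mf ^ lam * Mg ^ (1 - lam))
                = (ENNReal.ofReal t ^ lam * ENNReal.ofReal t ^ (1 - lam)) * (Mf ^ lam * Mg ^ (1 - lam)) := by rw [this]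
              _ = ENNReal.ofReal t ^ lam * Mf ^ lam * (ENNReal.ofReal t ^ (1 - lam) * Mg ^ (1 - lam)) := by ring
        _ ≤ f a ^ lam * g b ^ (1 - lam) := by
            exact mul_le_mul' (ENNReal.rpow_le_rpow hfa h0.le) (ENNReal.rpow_le_rpow hgb h1'.le)
    show t ≤ H (lam • a + (1 - lam) • b)
    have hx : lam • a + (1 - lam) • b = lam * a + (1 - lam) * b := rfl
    rw [hx, hH]
    have hmin : ENNReal.ofReal t ≤ h'' (lam * a + (1 - lam) * b) := by
      rw [hh'']
      refine le_min ?_ (by exact (ENNReal.ofReal_le_one).mpr ht1.le)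
      exact ENNReal.le_div_iff_mul_le (Or.inl hc0) (Or.inl hcT) |>.mpr hcomb
    have := ENNReal.toReal_mono (hh''T _) hmin
    rwa [ENNReal.toReal_ofReal ht0.le] at this
  -- measurability of the level-measure functions
  have hmF : Measurable fun t : ℝ => volume {a | t ≤ F a} :=
    Antitone.measurable fun t t' htt' => measure_mono fun a (ha : t' ≤ F a) => le_trans htt' ha
  have hmG : Measurable fun t : ℝ => volume {a | t ≤ G a} :=
    Antitone.measurable fun t t' htt' => measure_mono fun a (ha : t' ≤ G a) => le_trans htt' ha
  -- main chain
  have main : ENNReal.ofReal lam * (∫⁻ x, f' x) + ENNReal.ofReal (1 - lam) * (∫⁻ x, g' x)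
      ≤ ∫⁻ x, h'' x := by
    rw [LCf, LCg, LCh, restr F hFle1, restr G hGle1]
    rw [← lintegral_const_mul' _ _ ENNReal.ofReal_ne_top,
        ← lintegral_const_mul' _ _ ENNReal.ofReal_ne_top,
        ← lintegral_add_left (by fun_prop : Measurable fun t : ℝ =>
            ENNReal.ofReal lam * volume {a | t ≤ F a})]
    calc ∫⁻ t in Ioo (0:ℝ) 1, (ENNReal.ofReal lam * volume {a | t ≤ F a}
            + ENNReal.ofReal (1 - lam) * volume {a | t ≤ G a})
        ≤ ∫⁻ t in Ioo (0:ℝ) 1, volume {x | t ≤ H x} := by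
          refine setLIntegral_mono (Antitone.measurable fun t t' htt' =>
            measure_mono fun a (ha : t' ≤ H a) => le_trans htt' ha) key
      _ ≤ ∫⁻ t in Ioi (0:ℝ), volume {x | t ≤ H x} :=
          lintegral_mono_set (fun t ht => ht.1)
  have hIh'' : (∫⁻ x, h'' x) ≤ (∫⁻ x, h x) * c⁻¹ := by
    rw [← lintegral_mul_const' _ _ (ENNReal.inv_ne_top.mpr hc0)]
    exact lintegral_mono fun x => le_trans (min_le_left _ _) (le_of_eq (div_eq_mul_inv _ _))
  have final : c * (∫⁻ x, f' x) ^ lam * (∫⁻ x, g' x) ^ (1 - lam) ≤ ∫⁻ x, h x := by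
    calc c * (∫⁻ x, f' x) ^ lam * (∫⁻ x, g' x) ^ (1 - lam)
        = c * ((∫⁻ x, f' x) ^ lam * (∫⁻ x, g' x) ^ (1 - lam)) := by ring
      _ ≤ c * (ENNReal.ofReal lam * (∫⁻ x, f' x) + ENNReal.ofReal (1 - lam) * (∫⁻ x, g' x)) := by
          exact mul_le_mul_right (ennreal_amgm h0 h1 _ _) c
      _ ≤ c * (∫⁻ x, h'' x) := mul_le_mul_right main c
      _ ≤ c * ((∫⁻ x, h x) * c⁻¹) := mul_le_mul_right hIh'' c
      _ = (∫⁻ x, h x) * (c⁻¹ * c) := by ring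
      _ = ∫⁻ x, h x := by rw [ENNReal.inv_mul_cancel hc0 hcT, mul_one]
  calc (∫⁻ x, f x) ^ lam * (∫⁻ x, g x) ^ (1 - lam)
      = (Mf * ∫⁻ x, f' x) ^ lam * (Mg * ∫⁻ x, g' x) ^ (1 - lam) := by rw [← hIf, ← hIg]
    _ = Mf ^ lam * (∫⁻ x, f' x) ^ lam * (Mg ^ (1 - lam) * (∫⁻ x, g' x) ^ (1 - lam)) := by
        rw [ENNReal.mul_rpow_of_ne_top hfs hIf'fin, ENNReal.mul_rpow_of_ne_top hgs hIg'fin]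
    _ = c * (∫⁻ x, f' x) ^ lam * (∫⁻ x, g' x) ^ (1 - lam) := by rw [hc]; ring
    _ ≤ ∫⁻ x, h x := final

lemma bm1_log {S T : Set ℝ} (hS : IsCompact S) (hSne : S.Nonempty)
    (hT : IsCompact T) (hTne : T.Nonempty) {lam : ℝ} (h0 : 0 < lam) (h1 : lam < 1) :
    volume S ^ lam * volume T ^ (1 - lam) ≤ volume (lam • S + (1 - lam) • T) :=
  le_trans (ennreal_amgm h0 h1 _ _)
    (bm1_smul hS.measurableSet hSne hT.measurableSet hTne
      hS.measure_lt_top.ne hT.measure_lt_top.ne h0 h1)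

lemma bm2 {lam : ℝ} (h0 : 0 < lam) (h1 : lam < 1) {A B : Set (ℝ × ℝ)}
    (hA : IsCompact A) (hAne : A.Nonempty) (hB : IsCompact B) (hBne : B.Nonempty) :
    volume A ^ lam * volume B ^ (1 - lam) ≤ volume (lam • A + (1 - lam) • B) := by
  have h1' : (0:ℝ) < 1 - lam := by linarith
  set Q := lam • A + (1 - lam) • B with hQ
  have hQc : IsCompact Q := (hA.smul lam).add (hB.smul (1 - lam))
  have hprodvol : (volume : Measure (ℝ × ℝ)) = (volume : Measure ℝ).prod volume :=
    MeasureTheory.Measure.volume_eq_prod ℝ ℝ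
  set f := fun x : ℝ => volume (Prod.mk x ⁻¹' A) with hfd
  set g := fun x : ℝ => volume (Prod.mk x ⁻¹' B) with hgd
  set h := fun x : ℝ => volume (Prod.mk x ⁻¹' Q) with hhd
  have hfm : Measurable f := measurable_measure_prodMk_left hA.measurableSet
  have hgm : Measurable g := measurable_measure_prodMk_left hB.measurableSet
  have hhm : Measurable h := measurable_measure_prodMk_left hQc.measurableSet
  have hIf : (∫⁻ x, f x) = volume A := by
    rw [hprodvol, Measure.prod_apply hA.measurableSet]
  have hIg : (∫⁻ x, g x) = volume B := by
    rw [hprodvol, Measure.prod_apply hB.measurableSet]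
  have hIh : (∫⁻ x, h x) = volume Q := by
    rw [hprodvol, Measure.prod_apply hQc.measurableSet]
  -- sections as compact sets
  have hsec : ∀ (C : Set (ℝ × ℝ)), IsCompact C → ∀ a : ℝ,
      Prod.mk a ⁻¹' C = Prod.snd '' (C ∩ ({a} ×ˢ univ)) := by
    intro C _ a
    ext y
    simp only [mem_preimage, mem_image, mem_inter_iff, mem_prod, mem_singleton_iff, mem_univ,
      and_true]
    constructor
    · intro hy; exact ⟨(a, y), ⟨hy, rfl⟩, rfl⟩
    · rintro ⟨⟨p1, p2⟩, ⟨hp, rfl⟩, rfl⟩; exact hp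
  have hseccomp : ∀ (C : Set (ℝ × ℝ)), IsCompact C → ∀ a : ℝ,
      IsCompact (Prod.mk a ⁻¹' C) := by
    intro C hC a
    rw [hsec C hC a]
    exact ((hC.inter_right ((isClosed_singleton.prod isClosed_univ))).image continuous_snd)
  -- bounds on f, g
  have hfbd : ∀ x, f x ≤ volume (Prod.snd '' A) := by
    intro x
    refine measure_mono fun y hy => ⟨(x, y), hy, rfl⟩
  have hgbd : ∀ x, g x ≤ volume (Prod.snd '' B) := by
    intro x
    refine measure_mono fun y hy => ⟨(x, y), hy, rfl⟩
  have hfs : (⨆ x, f x) ≠ ⊤ :=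
    ne_top_of_le_ne_top (hA.image continuous_snd).measure_lt_top.ne (iSup_le hfbd)
  have hgs : (⨆ x, g x) ≠ ⊤ :=
    ne_top_of_le_ne_top (hB.image continuous_snd).measure_lt_top.ne (iSup_le hgbd)
  -- key pointwise inequality
  have hle : ∀ a b : ℝ, f a ^ lam * g b ^ (1 - lam) ≤ h (lam * a + (1 - lam) * b) := by
    intro a b
    rcases eq_empty_or_nonempty (Prod.mk a ⁻¹' A) with hea | hna
    · have : f a = 0 := by rw [hfd]; simp [hea]
      rw [this, ENNReal.zero_rpow_of_pos h0, zero_mul]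
      exact zero_le
    rcases eq_empty_or_nonempty (Prod.mk b ⁻¹' B) with heb | hnb
    · have : g b = 0 := by rw [hgd]; simp [heb]
      rw [this, ENNReal.zero_rpow_of_pos h1', mul_zero]
      exact zero_le
    have hkey := bm1_log (hseccomp A hA a) hna (hseccomp B hB b) hnb h0 h1
    refine le_trans hkey (measure_mono ?_)
    rintro z ⟨u, ⟨y1, hy1, rfl⟩, v, ⟨y2, hy2, rfl⟩, rfl⟩
    show (lam * a + (1 - lam) * b, lam • y1 + (1 - lam) • y2) ∈ Q
    refine ⟨lam • (a, y1), ⟨(a, y1), hy1, rfl⟩, (1 - lam) • (b, y2), ⟨(b, y2), hy2, rfl⟩, ?_⟩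
    simp [Prod.ext_iff, smul_eq_mul]
  have := pl1 h0 h1 f g h hfm hgm hhm
    (hIf ▸ hA.measure_lt_top.ne) (hIg ▸ hB.measure_lt_top.ne) hfs hgs hle
  rwa [hIf, hIg, hIh] at this

noncomputable def phiE : EuclideanSpace ℝ (Fin 2) ≃ᵐ ℝ × ℝ :=
  (MeasurableEquiv.toLp 2 (Fin 2 → ℝ)).symm.trans MeasurableEquiv.finTwoArrow

lemma phiE_mp : MeasurePreserving (phiE : EuclideanSpace ℝ (Fin 2) → ℝ × ℝ) volume volume :=
  (volume_preserving_finTwoArrow ℝ).comp (EuclideanSpace.volume_preserving_symm_measurableEquiv_toLp (Fin 2))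

lemma phiE_image_vol (S : Set (EuclideanSpace ℝ (Fin 2))) (hS : MeasurableSet S) :
    volume (phiE '' S) = volume S := by
  rw [MeasurableEquiv.image_eq_preimage_symm]
  exact (phiE_mp.symm phiE).measure_preimage hS.nullMeasurableSet

lemma phiE_cont : Continuous (phiE : EuclideanSpace ℝ (Fin 2) → ℝ × ℝ) := by
  have : (phiE : EuclideanSpace ℝ (Fin 2) → ℝ × ℝ) = fun p => (p 0, p 1) := rfl
  rw [this]; fun_prop

lemma phiE_image_comb (lam : ℝ) (A B : Set (EuclideanSpace ℝ (Fin 2))) :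
    phiE '' (lam • A + (1 - lam) • B) = lam • (phiE '' A) + (1 - lam) • (phiE '' B) := by
  ext z
  constructor
  · rintro ⟨w, ⟨u, ⟨x, hx, rfl⟩, v, ⟨y, hy, rfl⟩, rfl⟩, rfl⟩
    exact ⟨lam • phiE x, ⟨phiE x, ⟨x, hx, rfl⟩, rfl⟩,
      (1 - lam) • phiE y, ⟨phiE y, ⟨y, hy, rfl⟩, rfl⟩, rfl⟩
  · rintro ⟨_, ⟨_, ⟨x, hx, rfl⟩, rfl⟩, _, ⟨_, ⟨y, hy, rfl⟩, rfl⟩, rfl⟩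
    exact ⟨lam • x + (1 - lam) • y, ⟨lam • x, ⟨x, hx, rfl⟩,
      (1 - lam) • y, ⟨y, hy, rfl⟩, rfl⟩, rfl⟩

lemma bm2E {lam : ℝ} (h0 : 0 < lam) (h1 : lam < 1)
    {A B : Set (EuclideanSpace ℝ (Fin 2))}
    (hA : IsCompact A) (hAne : A.Nonempty) (hB : IsCompact B) (hBne : B.Nonempty) :
    volume A ^ lam * volume B ^ (1 - lam) ≤ volume (lam • A + (1 - lam) • B) := by
  have hQc : IsCompact (lam • A + (1 - lam) • B) := (hA.smul lam).add (hB.smul (1 - lam))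
  have h1 := phiE_image_vol A hA.measurableSet
  have h2 := phiE_image_vol B hB.measurableSet
  have h3 := phiE_image_vol _ hQc.measurableSet
  have hbm := bm2 h0 ‹lam < 1› (hA.image phiE_cont) (hAne.image phiE)
    (hB.image phiE_cont) (hBne.image phiE)
  rw [← h1, ← h2, ← h3, phiE_image_comb]
  exact hbm

theorem stmt19
    (Ω : Set (EuclideanSpace ℝ (Fin 2)))
    (hΩ : Ω = {p : EuclideanSpace ℝ (Fin 2) | |p 0| ≤ π / 2 ∧ |p 1| ≤ 1 / 2})
    (μ : Measure (EuclideanSpace ℝ (Fin 2)))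
    (hμ : μ = (volume Ω)⁻¹ • volume.restrict Ω) :
    (∀ A B : Set (EuclideanSpace ℝ (Fin 2)),
        IsCompact A → A.Nonempty → IsCompact B → B.Nonempty →
        ∀ lam : ℝ, 0 < lam → lam < 1 →
          μ A ^ lam * μ B ^ (1 - lam) ≤ μ (lam • A + (1 - lam) • B)) ∧
    volume (Metric.closedBall (0 : EuclideanSpace ℝ (Fin 2)) 1) = ENNReal.ofReal π ∧
    volume Ω = ENNReal.ofReal π ∧
    (∀ t : ℝ, 0 < t →
      μ (t • Metric.closedBall (0 : EuclideanSpace ℝ (Fin 2)) 1) ≤ μ (t • Ω)) ∧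
    ¬ Metric.closedBall (0 : EuclideanSpace ℝ (Fin 2)) 1 ⊆ Ω := by
  have hπ : (0:ℝ) < π := pi_pos
  -- Ω is closed
  have hΩclosed : IsClosed Ω := by
    rw [hΩ]
    have : {p : EuclideanSpace ℝ (Fin 2) | |p 0| ≤ π / 2 ∧ |p 1| ≤ 1 / 2}
        = (fun p : EuclideanSpace ℝ (Fin 2) => |p 0|) ⁻¹' Iic (π/2)
          ∩ (fun p : EuclideanSpace ℝ (Fin 2) => |p 1|) ⁻¹' Iic (1/2) := rfl
    rw [this]
    have hc0 : Continuous fun p : EuclideanSpace ℝ (Fin 2) => |p 0| := by fun_prop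
    have hc1 : Continuous fun p : EuclideanSpace ℝ (Fin 2) => |p 1| := by fun_prop
    exact (isClosed_Iic.preimage hc0).inter (isClosed_Iic.preimage hc1)
  have hΩmeas : MeasurableSet Ω := hΩclosed.measurableSet
  -- Ω is convex
  have hΩconv : Convex ℝ Ω := by
    rw [hΩ]
    rintro x ⟨hx0, hx1⟩ y ⟨hy0, hy1⟩ a b ha hb hab
    have e0 : (a • x + b • y) 0 = a * x 0 + b * y 0 := rfl
    have e1 : (a • x + b • y) 1 = a * x 1 + b * y 1 := rfl
    constructor
    · rw [e0]
      calc |a * x 0 + b * y 0| ≤ |a * x 0| + |b * y 0| := abs_add_le _ _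
        _ = a * |x 0| + b * |y 0| := by
            rw [abs_mul, abs_mul, abs_of_nonneg ha, abs_of_nonneg hb]
        _ ≤ a * (π/2) + b * (π/2) := by
            apply add_le_add <;> apply mul_le_mul_of_nonneg_left <;> assumption
        _ = π/2 := by rw [← add_mul, hab, one_mul]
    · rw [e1]
      calc |a * x 1 + b * y 1| ≤ |a * x 1| + |b * y 1| := abs_add_le _ _
        _ = a * |x 1| + b * |y 1| := by
            rw [abs_mul, abs_mul, abs_of_nonneg ha, abs_of_nonneg hb]
        _ ≤ a * (1/2) + b * (1/2) := by
            apply add_le_add <;> apply mul_le_mul_of_nonneg_left <;> assumption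
        _ = 1/2 := by rw [← add_mul, hab, one_mul]
  -- volume of Ω
  have hvolΩ : volume Ω = ENNReal.ofReal π := by
    have hpre : Ω = phiE ⁻¹' (Icc (-(π/2)) (π/2) ×ˢ Icc (-(1/2 : ℝ)) (1/2)) := by
      rw [hΩ]; ext p
      simp only [mem_setOf_eq, mem_preimage, mem_prod, mem_Icc]
      constructor
      · rintro ⟨h0, h1⟩
        exact ⟨abs_le.mp h0, abs_le.mp h1⟩
      · rintro ⟨h0, h1⟩
        exact ⟨abs_le.mpr h0, abs_le.mpr h1⟩
    rw [hpre, phiE_mp.measure_preimage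
      ((measurableSet_Icc.prod measurableSet_Icc).nullMeasurableSet)]
    rw [MeasureTheory.Measure.volume_eq_prod, Measure.prod_prod, Real.volume_Icc,
      Real.volume_Icc]
    rw [show π/2 - (-(π/2)) = π by ring, show (1:ℝ)/2 - (-(1/2)) = 1 by ring]
    simp
  -- volume of the unit ball
  have hvolB : volume (Metric.closedBall (0 : EuclideanSpace ℝ (Fin 2)) 1)
      = ENNReal.ofReal π := by
    rw [EuclideanSpace.volume_closedBall]
    simp only [Fintype.card_fin]
    rw [show ((2:ℕ):ℝ)/2 + 1 = 2 by norm_num]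
    rw [Real.Gamma_two]
    rw [Real.sq_sqrt hπ.le]
    simp
  -- μ applied to any set
  have hμapp : ∀ S : Set (EuclideanSpace ℝ (Fin 2)),
      μ S = (ENNReal.ofReal π)⁻¹ * volume (S ∩ Ω) := by
    intro S
    rw [hμ, Measure.smul_apply, smul_eq_mul, Measure.restrict_apply' hΩmeas, hvolΩ]
  have hπ0 : ENNReal.ofReal π ≠ 0 := by simp [hπ]
  have hπT : ENNReal.ofReal π ≠ ⊤ := ENNReal.ofReal_ne_top
  have hinv0 : (ENNReal.ofReal π)⁻¹ ≠ 0 := ENNReal.inv_ne_zero.mpr hπT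
  have hinvT : (ENNReal.ofReal π)⁻¹ ≠ ⊤ := ENNReal.inv_ne_top.mpr hπ0
  refine ⟨?_, hvolB, hvolΩ, ?_, ?_⟩
  -- Part 1: log-concavity
  · intro A B hA hAne hB hBne lam hl0 hl1
    have hl1' : (0:ℝ) < 1 - lam := by linarith
    rw [hμapp, hμapp, hμapp]
    set c := (ENNReal.ofReal π)⁻¹ with hc
    have hccomb : c ^ lam * c ^ (1 - lam) = c :=
      by rw [← ENNReal.rpow_add _ _ hinv0 hinvT]; norm_num
    have key : volume (A ∩ Ω) ^ lam * volume (B ∩ Ω) ^ (1 - lam)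
        ≤ volume ((lam • A + (1 - lam) • B) ∩ Ω) := by
      rcases eq_empty_or_nonempty (A ∩ Ω) with he | hne
      · rw [he, measure_empty, ENNReal.zero_rpow_of_pos hl0, zero_mul]
        exact zero_le
      rcases eq_empty_or_nonempty (B ∩ Ω) with he' | hne'
      · rw [he', measure_empty, ENNReal.zero_rpow_of_pos hl1', mul_zero]
        exact zero_le
      calc volume (A ∩ Ω) ^ lam * volume (B ∩ Ω) ^ (1 - lam)
          ≤ volume (lam • (A ∩ Ω) + (1 - lam) • (B ∩ Ω)) :=
            bm2E hl0 hl1 (hA.inter_right hΩclosed) hne (hB.inter_right hΩclosed) hne'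
        _ ≤ volume ((lam • A + (1 - lam) • B) ∩ Ω) := by
            refine measure_mono ?_
            rintro x ⟨u, ⟨x1, ⟨hx1A, hx1Ω⟩, rfl⟩, v, ⟨x2, ⟨hx2B, hx2Ω⟩, rfl⟩, rfl⟩
            exact ⟨⟨lam • x1, ⟨x1, hx1A, rfl⟩, (1 - lam) • x2, ⟨x2, hx2B, rfl⟩, rfl⟩,
              hΩconv hx1Ω hx2Ω hl0.le (by linarith) (by ring)⟩
    calc (c * volume (A ∩ Ω)) ^ lam * (c * volume (B ∩ Ω)) ^ (1 - lam)
        = (c ^ lam * c ^ (1 - lam)) * (volume (A ∩ Ω) ^ lam * volume (B ∩ Ω) ^ (1 - lam)) := by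
          rw [ENNReal.mul_rpow_of_ne_top hinvT (hA.inter_right hΩclosed).measure_lt_top.ne,
            ENNReal.mul_rpow_of_ne_top hinvT (hB.inter_right hΩclosed).measure_lt_top.ne]
          ring
      _ = c * (volume (A ∩ Ω) ^ lam * volume (B ∩ Ω) ^ (1 - lam)) := by rw [hccomb]
      _ ≤ c * volume ((lam • A + (1 - lam) • B) ∩ Ω) := mul_le_mul_right key c
  -- Part 4: comparison for dilates
  · intro t ht
    rw [hμapp, hμapp]
    refine mul_le_mul_right ?_ _
    rcases le_or_gt 1 t with h1t | ht1
    · -- t ≥ 1 : Ω ⊆ t • Ω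
      have hsub : Ω ⊆ t • Ω := by
        intro p hp
        have hts : t • t⁻¹ • p = p := by
          rw [smul_smul, mul_inv_cancel₀ (by linarith : t ≠ 0), one_smul]
        refine ⟨t⁻¹ • p, ?_, hts⟩
        rw [hΩ] at hp ⊢
        obtain ⟨hp0, hp1⟩ := hp
        have htated : |t⁻¹| ≤ 1 := by
          rw [abs_of_nonneg (by positivity : (0:ℝ) ≤ t⁻¹)]
          exact inv_le_one_of_one_le₀ h1t
        constructor
        · show |(t⁻¹ • p) 0| ≤ π/2
          have : (t⁻¹ • p) 0 = t⁻¹ * p 0 := rfl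
          rw [this, abs_mul]
          calc |t⁻¹| * |p 0| ≤ 1 * |p 0| := mul_le_mul_of_nonneg_right htated (abs_nonneg _)
            _ = |p 0| := one_mul _
            _ ≤ π/2 := hp0
        · show |(t⁻¹ • p) 1| ≤ 1/2
          have : (t⁻¹ • p) 1 = t⁻¹ * p 1 := rfl
          rw [this, abs_mul]
          calc |t⁻¹| * |p 1| ≤ 1 * |p 1| := mul_le_mul_of_nonneg_right htated (abs_nonneg _)
            _ = |p 1| := one_mul _
            _ ≤ 1/2 := hp1
      have heq : (t • Ω) ∩ Ω = Ω := inter_eq_right.mpr hsub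
      rw [heq]
      exact measure_mono inter_subset_right
    · -- t < 1 : t • Ω ⊆ Ω
      have hsub : t • Ω ⊆ Ω := by
        rintro _ ⟨p, hp, rfl⟩
        rw [hΩ] at hp ⊢
        obtain ⟨hp0, hp1⟩ := hp
        have htle : |t| ≤ 1 := by
          rw [abs_of_pos ht]; linarith
        constructor
        · show |(t • p) 0| ≤ π/2
          have : (t • p) 0 = t * p 0 := rfl
          rw [this, abs_mul]
          calc |t| * |p 0| ≤ 1 * |p 0| := mul_le_mul_of_nonneg_right htle (abs_nonneg _)
            _ = |p 0| := one_mul _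
            _ ≤ π/2 := hp0
        · show |(t • p) 1| ≤ 1/2
          have : (t • p) 1 = t * p 1 := rfl
          rw [this, abs_mul]
          calc |t| * |p 1| ≤ 1 * |p 1| := mul_le_mul_of_nonneg_right htle (abs_nonneg _)
            _ = |p 1| := one_mul _
            _ ≤ 1/2 := hp1
      have heq : (t • Ω) ∩ Ω = t • Ω := inter_eq_left.mpr hsub
      rw [heq]
      calc volume ((t • Metric.closedBall (0 : EuclideanSpace ℝ (Fin 2)) 1) ∩ Ω)
          ≤ volume (t • Metric.closedBall (0 : EuclideanSpace ℝ (Fin 2)) 1) :=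
            measure_mono inter_subset_left
        _ = ENNReal.ofReal |t ^ Module.finrank ℝ (EuclideanSpace ℝ (Fin 2))|
              * volume (Metric.closedBall (0 : EuclideanSpace ℝ (Fin 2)) 1) :=
            Measure.addHaar_smul _ _ _
        _ = ENNReal.ofReal |t ^ Module.finrank ℝ (EuclideanSpace ℝ (Fin 2))| * volume Ω := by
            rw [hvolB, hvolΩ]
        _ = volume (t • Ω) := (Measure.addHaar_smul _ _ _).symm
  -- Part 5: the ball is not contained in Ω
  · intro hsub
    have hmem : EuclideanSpace.single (1 : Fin 2) (1:ℝ)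
        ∈ Metric.closedBall (0 : EuclideanSpace ℝ (Fin 2)) 1 := by
      rw [mem_closedBall_zero_iff, EuclideanSpace.norm_single]
      norm_num
    have := hsub hmem
    rw [hΩ] at this
    have h1 := this.2
    rw [EuclideanSpace.single_apply] at h1
    simp at h1
    linarith
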